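/- Let π ∈ F_q[T] be monic of degree 1. For nonnegative integers d, e, the number Λ_π(d, e) of pairs (f, ν) of monic polynomials in F_q[T] with deg f = d, deg ν = e and gcd(f, πν) = 1 equals: q^e if d = 0; q^{d+e}(1 − q^{−1})(1 − q^{−2d})/(1 + q^{−1}) if e ≥ d > 0; and q^{d+e}(1 − q^{−1})(1 + q^{−2e−1})/(1 + q^{−1}) if d > e. -/
import Mathlib


open Polynomial

noncomputable section

namespace MDS

/-- `Λ_π(d, e)`: the number of pairs `(f, ν)` of monic polynomials with `deg f = d`,
`deg ν = e` and `gcd(f, π ν) = 1`. -/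
def Lam (F : Type) [Field F] (π : Polynomial F) (d e : ℕ) : ℕ :=
  Nat.card {fv : Polynomial F × Polynomial F //
    fv.1.Monic ∧ fv.1.natDegree = d ∧ fv.2.Monic ∧ fv.2.natDegree = e ∧
      IsCoprime fv.1 (π * fv.2)}

set_option linter.unusedVariables false


def monicEquiv (F : Type) [Field F] (n : ℕ) :
    {f : F[X] // f.Monic ∧ f.natDegree = n} ≃ Polynomial.degreeLT F n where
  toFun f := ⟨(f : F[X]) - X ^ n, by
    rw [Polynomial.mem_degreeLT]
    have hd : (f : F[X]).degree = ((X : F[X]) ^ n).degree := by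
      rw [degree_X_pow, Polynomial.degree_eq_natDegree f.2.1.ne_zero, f.2.2]
    calc ((f : F[X]) - X ^ n).degree < (f : F[X]).degree :=
          Polynomial.degree_sub_lt hd f.2.1.ne_zero (by simp [f.2.1.leadingCoeff])
      _ = n := by rw [hd, degree_X_pow]⟩
  invFun g := ⟨X ^ n + (g : F[X]), by
    have hg : (g : F[X]).degree < n := Polynomial.mem_degreeLT.mp g.2
    refine ⟨Polynomial.monic_X_pow_add hg, ?_⟩
    have h2 : (X ^ n + (g : F[X])).degree = (n : WithBot ℕ) := by
      rw [Polynomial.degree_add_eq_left_of_degree_lt (by simpa using hg), degree_X_pow]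
    exact natDegree_eq_of_degree_eq_some h2⟩
  left_inv f := by ext1; simp
  right_inv g := by ext1; simp

lemma card_monic (F : Type) [Field F] [Fintype F] (n : ℕ) :
    Nat.card {f : F[X] // f.Monic ∧ f.natDegree = n} = Fintype.card F ^ n := by
  rw [Nat.card_congr ((monicEquiv F n).trans (Polynomial.degreeLTEquiv F n).toEquiv)]
  simp [Nat.card_eq_fintype_card, Fintype.card_fun]

instance finiteMonic (F : Type) [Field F] [Finite F] (n : ℕ) :
    Finite {f : F[X] // f.Monic ∧ f.natDegree = n} := by
  have := Fintype.ofFinite F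
  exact Finite.of_equiv _ ((monicEquiv F n).trans (Polynomial.degreeLTEquiv F n).toEquiv).symm
variable {F : Type} [Field F]

lemma prime_pi {π : F[X]} (hπ : π.Monic) (hπd : π.natDegree = 1) : Prime π := by
  have h : π = X - C (-(π.coeff 0)) := by rw [map_neg, sub_neg_eq_add]; exact hπ.eq_X_add_C hπd
  rw [h]; exact Polynomial.prime_X_sub_C _

lemma card_dvd_pi [Fintype F] {π : F[X]} (hπ : π.Monic) (hπd : π.natDegree = 1) (n : ℕ) :
    Nat.card {f : F[X] // f.Monic ∧ f.natDegree = n + 1 ∧ π ∣ f} = Fintype.card F ^ n := by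
  have hb : Function.Bijective
      (fun g : {f : F[X] // f.Monic ∧ f.natDegree = n} =>
        (⟨π * g.1, hπ.mul g.2.1, by rw [hπ.natDegree_mul g.2.1, hπd, g.2.2, add_comm],
          Dvd.intro _ rfl⟩ :
          {f : F[X] // f.Monic ∧ f.natDegree = n + 1 ∧ π ∣ f})) := by
    constructor
    · intro g₁ g₂ h
      rw [Subtype.ext_iff] at h ⊢
      exact mul_left_cancel₀ hπ.ne_zero (by simpa using h)
    · rintro ⟨f, hf, hfd, c, rfl⟩
      have hc : c.Monic := hπ.of_mul_monic_left hf
      have hcd : c.natDegree = n := by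
        have h2 := hπ.natDegree_mul hc
        rw [hfd, hπd] at h2; omega
      exact ⟨⟨c, hc, hcd⟩, rfl⟩
  rw [← card_monic F n]
  exact (Nat.card_congr (Equiv.ofBijective _ hb)).symm

lemma card_split [Fintype F] (n : ℕ) (p : F[X] → Prop) :
    Nat.card {f : F[X] // f.Monic ∧ f.natDegree = n ∧ p f}
      + Nat.card {f : F[X] // f.Monic ∧ f.natDegree = n ∧ ¬ p f}
      = Fintype.card F ^ n := by
  classical
  have e1 : ∀ (q : F[X] → Prop), {f : F[X] // f.Monic ∧ f.natDegree = n ∧ q f}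
      ≃ {g : {f : F[X] // f.Monic ∧ f.natDegree = n} // q g.1} :=
    fun q => {
      toFun := fun f => ⟨⟨f.1, f.2.1, f.2.2.1⟩, f.2.2.2⟩
      invFun := fun g => ⟨g.1.1, g.1.2.1, g.1.2.2, g.2⟩
      left_inv := fun f => rfl
      right_inv := fun g => rfl }
  have := finiteMonic F (n := n)
  rw [Nat.card_congr (e1 p), Nat.card_congr (e1 fun f => ¬ p f), ← card_monic F n,
    ← Nat.card_sum]
  exact Nat.card_congr (Equiv.sumCompl _)

lemma card_B [Fintype F] {π : F[X]} (hπ : π.Monic) (hπd : π.natDegree = 1) (n : ℕ) :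
    Nat.card {f : F[X] // f.Monic ∧ f.natDegree = n ∧ ¬ π ∣ f}
      + Nat.card {f : F[X] // f.Monic ∧ f.natDegree = n ∧ π ∣ f}
      = Fintype.card F ^ n := by
  rw [add_comm]; exact card_split n _

lemma card_B_zero {π : F[X]} (hπ : π.Monic) (hπd : π.natDegree = 1) :
    Nat.card {f : F[X] // f.Monic ∧ f.natDegree = 0 ∧ ¬ π ∣ f} = 1 := by
  rw [Nat.card_eq_one_iff_unique]
  constructor
  · refine ⟨fun a b => ?_⟩
    obtain ⟨f, hf, hfd, hfp⟩ := a
    obtain ⟨g, hg, hgd, hgp⟩ := b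
    simp only [Subtype.mk.injEq]
    rw [hf.natDegree_eq_zero.mp hfd, hg.natDegree_eq_zero.mp hgd]
  · refine ⟨⟨1, monic_one, natDegree_one, ?_⟩⟩
    intro h
    have := Polynomial.natDegree_le_of_dvd h one_ne_zero
    simp [hπd] at this

section Main
variable [Fintype F] {π : F[X]} (hπ : π.Monic) (hπd : π.natDegree = 1)

/-- abbreviation for the Lam subtype -/
abbrev LamT (F : Type) [Field F] (π : F[X]) (d e : ℕ) :=
  {fv : Polynomial F × Polynomial F //
    fv.1.Monic ∧ fv.1.natDegree = d ∧ fv.2.Monic ∧ fv.2.natDegree = e ∧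
      IsCoprime fv.1 (π * fv.2)}

abbrev BT (F : Type) [Field F] (π : F[X]) (k : ℕ) :=
  {g : F[X] // g.Monic ∧ g.natDegree = k ∧ ¬ π ∣ g}

abbrev AT (F : Type) [Field F] (π : F[X]) (d e : ℕ) :=
  {fv : Polynomial F × Polynomial F //
    fv.1.Monic ∧ fv.1.natDegree = d ∧ fv.2.Monic ∧ fv.2.natDegree = e ∧ ¬ π ∣ fv.1}

instance (d e : ℕ) : Finite (LamT F π d e) := by
  apply Finite.of_injective (β := {f : F[X] // f.Monic ∧ f.natDegree = d}
    × {f : F[X] // f.Monic ∧ f.natDegree = e})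
    (fun x => (⟨x.1.1, x.2.1, x.2.2.1⟩, ⟨x.1.2, x.2.2.2.1, x.2.2.2.2.1⟩))
  rintro ⟨⟨a, b⟩, _⟩ ⟨⟨c, d⟩, _⟩ h
  simp only [Prod.mk.injEq, Subtype.mk.injEq] at h ⊢
  exact ⟨h.1, h.2⟩

instance (k : ℕ) : Finite (BT F π k) := by
  apply Finite.of_injective (β := {f : F[X] // f.Monic ∧ f.natDegree = k})
    (fun x => ⟨x.1, x.2.1, x.2.2.1⟩)
  rintro ⟨a, _⟩ ⟨c, _⟩ h
  simpa using h

/-- the key gcd computation -/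
lemma gcd_eq [DecidableEq F] (hπ : π.Monic) (hπd : π.natDegree = 1) {g f₁ ν₁ : F[X]} (hg : g.Monic)
    (hco : IsCoprime f₁ (π * ν₁)) :
    gcd (g * f₁) (π * (g * ν₁)) = g := by
  have h1 : gcd f₁ (π * ν₁) = 1 := by
    rw [← normalize_gcd, normalize_eq_one]
    exact (gcd_isUnit_iff _ _).mpr hco
  rw [mul_left_comm, gcd_mul_left, h1, mul_one, hg.normalize_eq_self]

lemma main_bij (d e : ℕ) : Function.Bijective
    (fun x : (Σ k : Fin (min d e + 1), BT F π k × LamT F π (d - k) (e - k)) =>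
      (⟨(x.2.1.1 * x.2.2.1.1, x.2.1.1 * x.2.2.1.2), by
        obtain ⟨⟨k, hk⟩, ⟨g, hg, hgd, hgπ⟩, ⟨⟨f₁, ν₁⟩, hf₁, hf₁d, hν₁, hν₁d, hco⟩⟩ := x
        simp only at *
        have hkd : k ≤ d := le_trans (Nat.lt_succ_iff.mp hk) (min_le_left d e)
        have hke : k ≤ e := le_trans (Nat.lt_succ_iff.mp hk) (min_le_right d e)
        refine ⟨hg.mul hf₁, ?_, hg.mul hν₁, ?_, ?_⟩
        · rw [hg.natDegree_mul hf₁, hgd, hf₁d]; omega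
        · rw [hg.natDegree_mul hν₁, hgd, hν₁d]; omega
        · intro hdvd
          rcases (prime_pi hπ hπd).2.2 _ _ hdvd with h | h
          · exact hgπ h
          · exact (prime_pi hπ hπd).not_unit
              (hco.isUnit_of_dvd' h (Dvd.intro _ rfl))⟩ : AT F π d e)) := by
  classical
  constructor
  · rintro ⟨⟨k, hk⟩, ⟨g, hg, hgd, hgπ⟩, ⟨⟨f₁, ν₁⟩, hf₁, hf₁d, hν₁, hν₁d, hco⟩⟩
      ⟨⟨k', hk'⟩, ⟨g', hg', hgd', hgπ'⟩, ⟨⟨f₁', ν₁'⟩, hf₁', hf₁d', hν₁', hν₁d', hco'⟩⟩ h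
    simp only [Subtype.mk.injEq, Prod.mk.injEq] at h
    obtain ⟨h1, h2⟩ := h
    have hgg : g = g' := by
      have e1 := gcd_eq hπ hπd hg hco
      have e2 := gcd_eq hπ hπd hg' hco'
      rw [← e1, ← e2, h1, h2]
    subst hgg
    have hkk : k = k' := by
      have h3 := hgd.symm.trans hgd'
      simpa using h3
    subst hkk
    have hff : f₁ = f₁' := mul_left_cancel₀ hg.ne_zero h1
    have hνν : ν₁ = ν₁' := mul_left_cancel₀ hg.ne_zero h2
    subst hff; subst hνν
    rfl
  · rintro ⟨⟨f, ν⟩, hf, hfd, hν, hνd, hfπ⟩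
    simp only at *
    set g := gcd f (π * ν) with hgdef
    have hgf : g ∣ f := gcd_dvd_left _ _
    have hgπν : g ∣ π * ν := gcd_dvd_right _ _
    have hgne : g ≠ 0 := by
      intro h0
      rw [hgdef, gcd_eq_zero_iff] at h0
      exact hf.ne_zero h0.1
    have hg : g.Monic := by
      have h := Polynomial.monic_normalize (p := gcd f (π * ν)) (by rwa [← hgdef])
      rwa [normalize_gcd, ← hgdef] at h
    have hgp : ¬ π ∣ g := fun h => hfπ (h.trans hgf)
    have hgν : g ∣ ν :=
      (((prime_pi hπ hπd).coprime_iff_not_dvd.mpr hgp).symm).dvd_of_dvd_mul_left hgπν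
    have hkd : g.natDegree ≤ d := hfd ▸ Polynomial.natDegree_le_of_dvd hgf hf.ne_zero
    have hke : g.natDegree ≤ e := hνd ▸ Polynomial.natDegree_le_of_dvd hgν hν.ne_zero
    obtain ⟨f₁, hf₁eq⟩ := hgf
    obtain ⟨ν₁, hν₁eq⟩ := hgν
    have hf₁ : f₁.Monic := hg.of_mul_monic_left (hf₁eq ▸ hf)
    have hν₁ : ν₁.Monic := hg.of_mul_monic_left (hν₁eq ▸ hν)
    have hf₁d : f₁.natDegree = d - g.natDegree := by
      have := hg.natDegree_mul hf₁
      rw [← hf₁eq, hfd] at this; omega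
    have hν₁d : ν₁.natDegree = e - g.natDegree := by
      have := hg.natDegree_mul hν₁
      rw [← hν₁eq, hνd] at this; omega
    have hco : IsCoprime f₁ (π * ν₁) := by
      have key : g * gcd f₁ (π * ν₁) = g * 1 := by
        conv_lhs => rw [← hg.normalize_eq_self]
        rw [← gcd_mul_left, ← mul_left_comm π g ν₁, ← hf₁eq, ← hν₁eq, ← hgdef, mul_one]
      have h6 : gcd f₁ (π * ν₁) = 1 := mul_left_cancel₀ hgne key
      exact (gcd_isUnit_iff _ _).mp (h6 ▸ isUnit_one)
    refine ⟨⟨⟨g.natDegree, by omega⟩, ⟨g, hg, rfl, hgp⟩, ⟨(f₁, ν₁), hf₁, hf₁d, hν₁, hν₁d, hco⟩⟩, ?_⟩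
    simp only [Subtype.mk.injEq, Prod.mk.injEq]
    exact ⟨hf₁eq.symm, hν₁eq.symm⟩



lemma nat_card_sigma {n : ℕ} (T : Fin n → Type) [∀ i, Finite (T i)] :
    Nat.card (Σ i, T i) = ∑ i : Fin n, Nat.card (T i) := by
  letI : ∀ i, Fintype (T i) := fun i => Fintype.ofFinite _
  simp [Nat.card_eq_fintype_card]

lemma recursion {π : F[X]} (hπ : π.Monic) (hπd : π.natDegree = 1) (d e : ℕ) :
    Nat.card (BT F π d) * Fintype.card F ^ e
      = ∑ k ∈ Finset.range (min d e + 1),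
          Nat.card (BT F π k) * Lam F π (d - k) (e - k) := by
  have e1 : AT F π d e ≃ BT F π d × {f : F[X] // f.Monic ∧ f.natDegree = e} :=
    { toFun := fun x => (⟨x.1.1, x.2.1, x.2.2.1, x.2.2.2.2.2⟩, ⟨x.1.2, x.2.2.2.1, x.2.2.2.2.1⟩)
      invFun := fun x => ⟨(x.1.1, x.2.1), x.1.2.1, x.1.2.2.1, x.2.2.1, x.2.2.2, x.1.2.2.2⟩
      left_inv := fun x => rfl
      right_inv := fun x => rfl }
  have e2 := (Equiv.ofBijective _ (main_bij hπ hπd d e)).trans e1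
  have h3 := Nat.card_congr e2
  rw [Nat.card_prod, card_monic] at h3
  rw [← h3, nat_card_sigma]
  rw [Finset.sum_range fun k => Nat.card (BT F π k) * Lam F π (d - k) (e - k)]
  congr 1
  ext k
  rw [Nat.card_prod]
  rfl


lemma Bq_succ {π : F[X]} (hπ : π.Monic) (hπd : π.natDegree = 1) (n : ℕ) :
    (Nat.card (BT F π (n + 1)) : ℚ)
      = (Fintype.card F : ℚ) ^ (n + 1) - (Fintype.card F : ℚ) ^ n := by
  have h1 := card_B (π := π) hπ hπd (n + 1)
  rw [card_dvd_pi hπ hπd n] at h1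
  have h2 := congrArg (Nat.cast : ℕ → ℚ) h1
  push_cast at h2
  linarith

lemma lam_zero_left {π : F[X]} (hπ : π.Monic) (hπd : π.natDegree = 1) (e : ℕ) :
    Lam F π 0 e = Fintype.card F ^ e := by
  have h := recursion hπ hπd 0 e
  simpa [card_B_zero hπ hπd] using h.symm

lemma lam_zero_right {π : F[X]} (hπ : π.Monic) (hπd : π.natDegree = 1) (d : ℕ) :
    Lam F π d 0 = Nat.card (BT F π d) := by
  have h := recursion hπ hπd d 0
  simpa [card_B_zero hπ hπd] using h.symm

lemma step {π : F[X]} (hπ : π.Monic) (hπd : π.natDegree = 1) (d e : ℕ) :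
    (Lam F π (d + 1) (e + 1) : ℚ) = (Lam F π d e : ℚ)
      + ((Nat.card (BT F π (d + 1)) : ℚ) - (Nat.card (BT F π d) : ℚ))
        * (Fintype.card F : ℚ) ^ (e + 1) := by
  have hmin : min (d + 1) (e + 1) = min d e + 1 := by omega
  have R1 := congrArg (Nat.cast : ℕ → ℚ) (recursion hπ hπd (d + 1) (e + 1))
  have R0 := congrArg (Nat.cast : ℕ → ℚ) (recursion hπ hπd d e)
  rw [hmin] at R1
  push_cast at R1 R0
  rw [Finset.sum_range_succ'] at R1
  simp only [Nat.succ_sub_succ, Nat.sub_zero] at R1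
  have hB : ∀ k : ℕ, (Nat.card (BT F π (k + 1)) : ℚ)
      = (Fintype.card F : ℚ) * (Nat.card (BT F π k) : ℚ) - (if k = 0 then 1 else 0) := by
    intro k
    cases k with
    | zero => simp [Bq_succ hπ hπd 0, card_B_zero hπ hπd]
    | succ j => rw [Bq_succ hπ hπd (j + 1), Bq_succ hπ hπd j]; simp; ring
  have hsum : ∑ k ∈ Finset.range (min d e + 1),
      (Nat.card (BT F π (k + 1)) : ℚ) * (Lam F π (d - k) (e - k) : ℚ)
      = (Fintype.card F : ℚ) * ∑ k ∈ Finset.range (min d e + 1),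
          (Nat.card (BT F π k) : ℚ) * (Lam F π (d - k) (e - k) : ℚ)
        - (Lam F π d e : ℚ) := by
    have hcong : ∀ k ∈ Finset.range (min d e + 1),
        (Nat.card (BT F π (k + 1)) : ℚ) * (Lam F π (d - k) (e - k) : ℚ)
        = (Fintype.card F : ℚ) * ((Nat.card (BT F π k) : ℚ) * (Lam F π (d - k) (e - k) : ℚ))
          - (if k = 0 then (Lam F π d e : ℚ) else 0) := by
      intro k _
      rw [hB k]
      rcases eq_or_ne k 0 with rfl | hk
      · simp; ring
      · simp [hk]; ring
    rw [Finset.sum_congr rfl hcong, Finset.sum_sub_distrib, ← Finset.mul_sum]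
    congr 1
    simp
  rw [hsum, ← R0, card_B_zero hπ hπd] at R1
  push_cast at R1
  have hq1 : (Fintype.card F : ℚ) ^ (e + 1)
      = (Fintype.card F : ℚ) * (Fintype.card F : ℚ) ^ e := by ring
  rw [hq1] at R1 ⊢
  linarith


lemma formulas {π : F[X]} (hπ : π.Monic) (hπd : π.natDegree = 1) : ∀ d e : ℕ,
    (d = 0 → (Lam F π d e : ℚ) = (Fintype.card F : ℚ) ^ e) ∧
    (d ≤ e → 0 < d → (Lam F π d e : ℚ)
      = (Fintype.card F : ℚ) ^ (d + e) * (1 - (Fintype.card F : ℚ)⁻¹)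
          * (1 - ((Fintype.card F : ℚ) ^ (2 * d))⁻¹) / (1 + (Fintype.card F : ℚ)⁻¹)) ∧
    (e < d → (Lam F π d e : ℚ)
      = (Fintype.card F : ℚ) ^ (d + e) * (1 - (Fintype.card F : ℚ)⁻¹)
          * (1 + ((Fintype.card F : ℚ) ^ (2 * e + 1))⁻¹) / (1 + (Fintype.card F : ℚ)⁻¹)) := by
  have hQ0 : (Fintype.card F : ℚ) ≠ 0 := by
    have := Fintype.card_pos (α := F)
    positivity
  have hQ1 : (Fintype.card F : ℚ) + 1 ≠ 0 := by
    have : (0:ℚ) < Fintype.card F := by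
      have := Fintype.card_pos (α := F); positivity
    linarith
  intro d
  induction d with
  | zero =>
    intro e
    refine ⟨fun _ => ?_, fun _ h => absurd h (lt_irrefl 0), fun h => absurd h (Nat.not_lt_zero e)⟩
    exact_mod_cast congrArg (Nat.cast (R := ℚ)) (lam_zero_left hπ hπd e)
  | succ d ih =>
    intro e
    refine ⟨fun h => absurd h d.succ_ne_zero, ?_, ?_⟩
    all_goals cases e with
    | zero =>
      first
      | exact fun h => absurd h (by omega)
      | intro _
        have hΛ : (Lam F π (d + 1) 0 : ℚ) = (Nat.card (BT F π (d + 1)) : ℚ) := by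
          exact_mod_cast congrArg (Nat.cast (R := ℚ)) (lam_zero_right hπ hπd (d + 1))
        rw [hΛ, Bq_succ hπ hπd d]
        field_simp
        ring
    | succ e =>
      have hstep := step hπ hπd d e
      obtain ⟨ih1, ih2, ih3⟩ := ih e
      first
      | -- part 2 : d + 1 ≤ e + 1
        intro hde hpos
        rcases Nat.eq_zero_or_pos d with rfl | hd
        · rw [ih1 rfl, card_B_zero hπ hπd, Bq_succ hπ hπd 0] at hstep
          rw [hstep]
          field_simp
          ring
        · obtain ⟨j, rfl⟩ : ∃ j, d = j + 1 := ⟨d - 1, by omega⟩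
          rw [ih2 (by omega) (by omega), Bq_succ hπ hπd (j + 1), Bq_succ hπ hπd j] at hstep
          rw [hstep]
          field_simp
          ring
      | -- part 3 : e + 1 < d + 1
        intro hed
        obtain ⟨j, rfl⟩ : ∃ j, d = j + 1 := ⟨d - 1, by omega⟩
        rw [ih3 (by omega), Bq_succ hπ hπd (j + 1), Bq_succ hπ hπd j] at hstep
        rw [hstep]
        field_simp
        ring

end Main

/-- explicit evaluation of `Λ_π(d, e)` for `π` monic of degree 1. -/
theorem statement_2
    (F : Type) [Field F] [Fintype F]
    (π : Polynomial F) (hπ : π.Monic) (hπd : π.natDegree = 1) (d e : ℕ) :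
    (d = 0 → (Lam F π d e : ℚ) = (Fintype.card F : ℚ) ^ e) ∧
    (d ≤ e → 0 < d → (Lam F π d e : ℚ)
      = (Fintype.card F : ℚ) ^ (d + e) * (1 - (Fintype.card F : ℚ)⁻¹)
          * (1 - ((Fintype.card F : ℚ) ^ (2 * d))⁻¹) / (1 + (Fintype.card F : ℚ)⁻¹)) ∧
    (e < d → (Lam F π d e : ℚ)
      = (Fintype.card F : ℚ) ^ (d + e) * (1 - (Fintype.card F : ℚ)⁻¹)
          * (1 + ((Fintype.card F : ℚ) ^ (2 * e + 1))⁻¹) / (1 + (Fintype.card F : ℚ)⁻¹)) := by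
  exact formulas hπ hπd d e

end MDS
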